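/- For m ≥ 4, the Hilbert series of K[x_1,x_2,x_3,x_4]/J_0, where J_0 = ⟨x_2x_3, x_3², x_1x_4, x_3x_4, x_4², x_2^m x_4, x_1^{m+2} x_3, x_2^{2m+1}⟩, equals (1 + 3t + t² + t³ + ⋯ + t^m + t^{m+2} + t^{m+4} + t^{m+5} + ⋯ + t^{2m})/(1−t). In particular the coefficients of the numerator are nonnegative, so the Hilbert function of the quotient is non-decreasing. -/

import Mathlib

open MvPolynomial PowerSeries

/-- The Hilbert function of the quotient by a monomial ideal: the number of monomials of
total degree `n` not lying in the ideal. -/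
noncomputable def monomialHF {K : Type*} [Field K] {d : ℕ}
    (I : Ideal (MvPolynomial (Fin d) K)) (n : ℕ) : ℕ :=
  {u : Fin d → ℕ | (∑ i, u i) = n ∧
    (monomial (Finsupp.equivFunOnFinite.symm u) (1 : K)) ∉ I}.ncard

/-- The ideal `J₀` of initial forms, for `m ≥ 4`. -/
noncomputable def Jzero (K : Type*) [Field K] (m : ℕ) : Ideal (MvPolynomial (Fin 4) K) :=
  Ideal.span ({MvPolynomial.X 1 * MvPolynomial.X 2, MvPolynomial.X 2 ^ 2,
    MvPolynomial.X 0 * MvPolynomial.X 3, MvPolynomial.X 2 * MvPolynomial.X 3,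
    MvPolynomial.X 3 ^ 2, MvPolynomial.X 1 ^ m * MvPolynomial.X 3,
    MvPolynomial.X 0 ^ (m + 2) * MvPolynomial.X 2,
    MvPolynomial.X 1 ^ (2 * m + 1)} : Set (MvPolynomial (Fin 4) K))

namespace Stmt11Aux

/-- The generating exponent vectors of `J₀`. -/
def gens (m : ℕ) : Set (Fin 4 →₀ ℕ) :=
  {Finsupp.single 1 1 + Finsupp.single 2 1, Finsupp.single 2 2,
   Finsupp.single 0 1 + Finsupp.single 3 1, Finsupp.single 2 1 + Finsupp.single 3 1,
   Finsupp.single 3 2, Finsupp.single 1 m + Finsupp.single 3 1,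
   Finsupp.single 0 (m+2) + Finsupp.single 2 1, Finsupp.single 1 (2*m+1)}

lemma auxXX {K : Type*} [Field K] (i j : Fin 4) (a b : ℕ) :
    (MvPolynomial.X i ^ a * MvPolynomial.X j ^ b : MvPolynomial (Fin 4) K) =
      monomial (Finsupp.single i a + Finsupp.single j b) 1 := by
  rw [X_pow_eq_monomial, X_pow_eq_monomial, monomial_mul, one_mul]

lemma Jzero_eq {K : Type*} [Field K] (m : ℕ) :
    Jzero K m = Ideal.span ((fun s => MvPolynomial.monomial s (1:K)) '' gens m) := by
  unfold Jzero gens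
  congr 1
  simp only [Set.image_insert_eq, Set.image_singleton]
  rw [show (MvPolynomial.X 1 * MvPolynomial.X 2 : MvPolynomial (Fin 4) K) = MvPolynomial.X 1 ^ 1 * MvPolynomial.X 2 ^ 1 by ring,
    show (MvPolynomial.X 0 * MvPolynomial.X 3 : MvPolynomial (Fin 4) K) = MvPolynomial.X 0 ^ 1 * MvPolynomial.X 3 ^ 1 by ring,
    show (MvPolynomial.X 2 * MvPolynomial.X 3 : MvPolynomial (Fin 4) K) = MvPolynomial.X 2 ^ 1 * MvPolynomial.X 3 ^ 1 by ring,
    show (MvPolynomial.X 1 ^ m * MvPolynomial.X 3 : MvPolynomial (Fin 4) K) = MvPolynomial.X 1 ^ m * MvPolynomial.X 3 ^ 1 by ring,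
    show (MvPolynomial.X 0 ^ (m+2) * MvPolynomial.X 2 : MvPolynomial (Fin 4) K) = MvPolynomial.X 0 ^ (m+2) * MvPolynomial.X 2 ^ 1 by ring,
    auxXX, auxXX, auxXX, auxXX, auxXX, X_pow_eq_monomial, X_pow_eq_monomial,
    X_pow_eq_monomial]

lemma mem_iff {K : Type*} [Field K] (m : ℕ) (u : Fin 4 → ℕ) :
    (monomial (Finsupp.equivFunOnFinite.symm u) (1:K)) ∈ Jzero K m ↔
    ((1 ≤ u 1 ∧ 1 ≤ u 2) ∨ 2 ≤ u 2 ∨ (1 ≤ u 0 ∧ 1 ≤ u 3) ∨ (1 ≤ u 2 ∧ 1 ≤ u 3) ∨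
      2 ≤ u 3 ∨ (m ≤ u 1 ∧ 1 ≤ u 3) ∨ (m+2 ≤ u 0 ∧ 1 ≤ u 2) ∨ 2*m+1 ≤ u 1) := by
  rw [Jzero_eq, mem_ideal_span_monomial_image]
  simp [support_monomial, gens, Finsupp.le_def, Fin.forall_fin_succ, Finsupp.single_apply,
    show (Fin.succ 0 : Fin 4) = 1 from rfl, show (Fin.succ 1 : Fin 4) = 2 from rfl,
    show (Fin.succ 2 : Fin 4) = 3 from rfl]

/-- The finite set of standard monomials of degree `n`. -/
def F (m n : ℕ) : Finset (Fin 4 → ℕ) :=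
  ((Finset.range (min n (2*m) + 1)).image fun b => ![n - b, b, 0, 0]) ∪
  (if 1 ≤ n ∧ n ≤ m + 2 then {![n-1, 0, 1, 0]} else ∅) ∪
  (if 1 ≤ n ∧ n ≤ m then {![0, n-1, 0, 1]} else ∅)

/-- Closed form of the Hilbert function. -/
def hf (m n : ℕ) : ℕ :=
  min n (2*m) + 1 + (if 1 ≤ n ∧ n ≤ m + 2 then 1 else 0) + (if 1 ≤ n ∧ n ≤ m then 1 else 0)

lemma card_F (m n : ℕ) : (F m n).card = hf m n := by
  rw [F, hf, Finset.card_union_of_disjoint, Finset.card_union_of_disjoint,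
    Finset.card_image_of_injective, Finset.card_range]
  · congr 1 <;> split_ifs <;> simp
  · intro x y h
    have := congrFun h 1
    simpa using this
  · rw [Finset.disjoint_left]
    intro u hu hv
    split_ifs at hv with h
    · simp only [Finset.mem_singleton] at hv
      simp only [Finset.mem_image, Finset.mem_range] at hu
      obtain ⟨b, _, rfl⟩ := hu
      have := congrFun hv 2
      simp at this
    · simp at hv
  · rw [Finset.disjoint_left]
    intro u hu hv
    split_ifs at hv with h
    · simp only [Finset.mem_singleton] at hv
      simp only [Finset.mem_union, Finset.mem_image, Finset.mem_range] at hu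
      rcases hu with ⟨b, _, rfl⟩ | hu
      · have := congrFun hv 3; simp at this
      · split_ifs at hu with h2
        · simp only [Finset.mem_singleton] at hu
          subst hu
          have := congrFun hv 2
          simp at this
        · simp at hu
    · simp at hv

lemma set_eq_F (m n : ℕ) :
    {u : Fin 4 → ℕ | (∑ i, u i) = n ∧
      ¬((1 ≤ u 1 ∧ 1 ≤ u 2) ∨ 2 ≤ u 2 ∨ (1 ≤ u 0 ∧ 1 ≤ u 3) ∨ (1 ≤ u 2 ∧ 1 ≤ u 3) ∨
        2 ≤ u 3 ∨ (m ≤ u 1 ∧ 1 ≤ u 3) ∨ (m+2 ≤ u 0 ∧ 1 ≤ u 2) ∨ 2*m+1 ≤ u 1)} =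
    ↑(F m n) := by
  ext u
  simp only [Set.mem_setOf_eq, F, Finset.coe_union, Set.mem_union, Finset.coe_image,
    Finset.coe_range, Set.mem_image, Set.mem_Iio, Fin.sum_univ_four, not_or, not_and, not_le]
  constructor
  · rintro ⟨hsum, h1, h2, h3, h4, h5, h6, h7, h8⟩
    rcases Nat.lt_or_ge (u 2) 1 with hc | hc
    · rcases Nat.lt_or_ge (u 3) 1 with hd | hd
      · left; left
        refine ⟨u 1, by omega, ?_⟩
        funext i; fin_cases i <;> simp <;> omega
      · right
        have hu0 : u 0 = 0 := by omega
        have hu2 : u 2 = 0 := by omega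
        have hu3 : u 3 = 1 := by omega
        have hb : u 1 < m := by omega
        rw [if_pos (by omega)]
        simp only [Finset.coe_singleton, Set.mem_singleton_iff]
        funext i; fin_cases i <;> simp <;> omega
    · left; right
      have hu1 : u 1 = 0 := by omega
      have hu2 : u 2 = 1 := by omega
      have hu3 : u 3 = 0 := by omega
      have ha : u 0 < m + 2 := by omega
      rw [if_pos (by omega)]
      simp only [Finset.coe_singleton, Set.mem_singleton_iff]
      funext i; fin_cases i <;> simp <;> omega
  · rintro ((⟨b, hb, rfl⟩ | h) | h)
    · simp only [Matrix.cons_val_zero, Matrix.cons_val_one, Matrix.head_cons,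
        Matrix.cons_val_two, Matrix.tail_cons, Matrix.cons_val_three]
      omega
    · split_ifs at h with hc
      · simp only [Finset.coe_singleton, Set.mem_singleton_iff] at h
        subst h
        simp only [Matrix.cons_val_zero, Matrix.cons_val_one, Matrix.head_cons,
          Matrix.cons_val_two, Matrix.tail_cons, Matrix.cons_val_three]
        omega
      · simp at h
    · split_ifs at h with hc
      · simp only [Finset.coe_singleton, Set.mem_singleton_iff] at h
        subst h
        simp only [Matrix.cons_val_zero, Matrix.cons_val_one, Matrix.head_cons,
          Matrix.cons_val_two, Matrix.tail_cons, Matrix.cons_val_three]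
        omega
      · simp at h

lemma monomialHF_eq {K : Type*} [Field K] (m n : ℕ) :
    monomialHF (Jzero K m) n = hf m n := by
  rw [monomialHF, ← card_F m n, ← Set.ncard_coe_finset, ← set_eq_F m n]
  congr 1
  ext u
  simp only [Set.mem_setOf_eq, mem_iff]


lemma hf_step (m n : ℕ) (hm : 4 ≤ m) : hf m (n+1) = hf m n +
    (if n + 1 < 2 * m + 1 then
      (if n + 1 = 1 then 3
        else if n + 1 = 0 ∨ (2 ≤ n + 1 ∧ n + 1 ≤ m) ∨ n + 1 = m + 2 ∨
          (m + 4 ≤ n + 1 ∧ n + 1 ≤ 2 * m) then 1 else 0)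
      else 0) := by
  simp only [hf, Nat.min_def]
  split_ifs <;> first | omega | (simp only [false_or] at *; omega)

lemma hf_zero (m : ℕ) : hf m 0 = 1 := by simp [hf]

lemma hf_mono (m n : ℕ) (hm : 4 ≤ m) : hf m n ≤ hf m (n+1) := by
  rw [hf_step m n hm]; split_ifs <;> omega

end Stmt11Aux

open Stmt11Aux in
/-- The Hilbert series of `K[x₁,…,x₄]/J₀` equals
`(1 + 3t + t² + t³ + ⋯ + t^m + t^{m+2} + t^{m+4} + ⋯ + t^{2m})/(1-t)`; the numerator has
nonnegative coefficients, so the Hilbert function is non-decreasing. -/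
theorem stmt_11 {K : Type*} [Field K] (m : ℕ) (hm : 4 ≤ m) :
    (PowerSeries.mk fun n => (monomialHF (Jzero K m) n : ℤ)) * (1 - PowerSeries.X) =
      ∑ k ∈ Finset.range (2 * m + 1),
        (if k = 1 then 3
          else if k = 0 ∨ (2 ≤ k ∧ k ≤ m) ∨ k = m + 2 ∨ (m + 4 ≤ k ∧ k ≤ 2 * m) then 1
          else (0 : ℤ)) • PowerSeries.X ^ k ∧
    Monotone (monomialHF (Jzero K m)) := by
  constructor
  · ext n
    rw [mul_sub, mul_one, map_sub, map_sum]
    have hrhs : ∀ k ∈ Finset.range (2 * m + 1),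
        (PowerSeries.coeff n) ((if k = 1 then 3
          else if k = 0 ∨ (2 ≤ k ∧ k ≤ m) ∨ k = m + 2 ∨ (m + 4 ≤ k ∧ k ≤ 2 * m) then 1
          else (0 : ℤ)) • PowerSeries.X ^ k) =
        (if n = k then (if k = 1 then 3
          else if k = 0 ∨ (2 ≤ k ∧ k ≤ m) ∨ k = m + 2 ∨ (m + 4 ≤ k ∧ k ≤ 2 * m) then 1
          else (0 : ℤ)) else 0) := by
      intro k _
      erw [PowerSeries.coeff_smul, PowerSeries.coeff_X_pow, smul_eq_mul, mul_ite, mul_one,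
        mul_zero]
    rw [Finset.sum_congr rfl hrhs, Finset.sum_ite_eq (Finset.range (2 * m + 1)) n]
    cases n with
    | zero =>
      rw [PowerSeries.coeff_zero_mul_X]
      simp only [PowerSeries.coeff_mk, monomialHF_eq, hf_zero, Finset.mem_range]
      norm_num
    | succ n =>
      rw [PowerSeries.coeff_succ_mul_X]
      simp only [PowerSeries.coeff_mk, monomialHF_eq, Finset.mem_range]
      rw [hf_step m n hm]
      push_cast
      rw [add_sub_cancel_left]
  · apply monotone_nat_of_le_succ
    intro n
    rw [monomialHF_eq, monomialHF_eq]
    exact hf_mono m n hm
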